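/- With the substitutions cos φ = x, x² = u, u = (cos²a - sin²a)t + sin²a, t = y², for 0 < a < π/4 one has ∫_a^{π/2-a} sin φ / √(1 - sin²a·cos²a/(sin²φ·cos²φ)) dφ = cos(a)·E(√(1-tan²a)). -/

import Mathlib

open Real Set

noncomputable def ellK (k : ℝ) : ℝ :=
  ∫ θ in (0:ℝ)..(Real.pi/2), 1 / Real.sqrt (1 - k^2 * Real.sin θ ^ 2)

noncomputable def ellE (k : ℝ) : ℝ :=
  ∫ θ in (0:ℝ)..(Real.pi/2), Real.sqrt (1 - k^2 * Real.sin θ ^ 2)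

/-- substitution function θ = h(φ) -/
noncomputable def subf (a φ : ℝ) : ℝ :=
  Real.arcsin (Real.sqrt ((Real.cos φ^2 - Real.sin a^2)/(Real.cos a^2 - Real.sin a^2)))

/-- its derivative -/
noncomputable def subf' (a φ : ℝ) : ℝ :=
  -(Real.sin φ * Real.cos φ) /
    Real.sqrt ((Real.cos φ^2 - Real.sin a^2) * (Real.cos a^2 - Real.cos φ^2))

/-- integrand after substitution -/
noncomputable def Gf (a θ : ℝ) : ℝ :=
  Real.cos a * Real.sqrt (1 - Real.sqrt (1 - Real.tan a^2)^2 * Real.sin θ ^ 2)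

lemma halfsin : ∀ t : ℝ, 0 ≤ t → t ≤ 1 → t/2 ≤ Real.sin t := by
  intro t ht ht1
  rcases eq_or_lt_of_le ht with h|h
  · simp [← h]
  · nlinarith [Real.sin_gt_sub_cube h, sq_nonneg t, mul_pos h h]

lemma aux_alg1 (A B sφ cφ : ℝ) (hA : 0 < A) (hB : 0 < B) :
    1/Real.sqrt (1 - Real.sqrt (A/(A+B))^2) * (1/(2*Real.sqrt (A/(A+B))) * (-(2*sφ*cφ)/(A+B)))
      = -(sφ * cφ) / Real.sqrt (A*B) := by
  have hd : 0 < A + B := by linarith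
  rw [Real.sq_sqrt (by positivity)]
  rw [show 1 - A/(A+B) = B/(A+B) by field_simp; ring]
  rw [Real.sqrt_div hB.le, Real.sqrt_div hA.le, Real.sqrt_mul hA.le]
  have qA : 0 < Real.sqrt A := Real.sqrt_pos.2 hA
  have qB : 0 < Real.sqrt B := Real.sqrt_pos.2 hB
  set z := Real.sqrt (A+B) with hzdef
  have hz0 : 0 < z := Real.sqrt_pos.2 hd
  have hz2 : z^2 = A+B := Real.sq_sqrt hd.le
  rw [← hz2]
  field_simp

lemma aux_alg2 (A B sφ cφ s c : ℝ) (hA : 0 < A) (hB : 0 < B) (hsφ : 0 < sφ) (hcφ : 0 < cφ)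
    (hid : sφ^2 * cφ^2 - s^2*c^2 = A * B) :
    sφ / Real.sqrt (1 - s^2*c^2/(sφ^2*cφ^2)) = sφ * (sφ*cφ) / Real.sqrt (A*B) := by
  have hQ : 1 - s^2*c^2/(sφ^2*cφ^2) = (A*B)/(sφ*cφ)^2 := by
    rw [← hid]
    field_simp
  have hAB : 0 < Real.sqrt (A*B) := Real.sqrt_pos.2 (mul_pos hA hB)
  rw [hQ, Real.sqrt_div (by positivity), Real.sqrt_sq (by positivity)]
  field_simp

lemma subf_cont (a : ℝ) : Continuous (subf a) :=
  Real.continuous_arcsin.comp (Real.continuous_sqrt.comp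
    (((Real.continuous_cos.pow 2).sub continuous_const).div_const _))

lemma Gf_cont (a : ℝ) : Continuous (Gf a) :=
  continuous_const.mul (Real.continuous_sqrt.comp
    (continuous_const.sub (continuous_const.mul (Real.continuous_sin.pow 2))))

lemma subf_deriv (a φ : ℝ) (hd : 0 < Real.cos a^2 - Real.sin a^2)
    (hP1 : 0 < Real.cos φ^2 - Real.sin a^2) (hP2 : 0 < Real.cos a^2 - Real.cos φ^2) :
    HasDerivAt (subf a) (subf' a φ) φ := by
  have hAB : (Real.cos φ^2 - Real.sin a^2) + (Real.cos a^2 - Real.cos φ^2)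
      = Real.cos a^2 - Real.sin a^2 := by ring
  have hv0 : 0 < (Real.cos φ^2 - Real.sin a^2)/(Real.cos a^2 - Real.sin a^2) := div_pos hP1 hd
  have hv1 : (Real.cos φ^2 - Real.sin a^2)/(Real.cos a^2 - Real.sin a^2) < 1 :=
    (div_lt_one hd).2 (by linarith)
  have dv : HasDerivAt (fun x => (Real.cos x^2 - Real.sin a^2)/(Real.cos a^2 - Real.sin a^2))
      (-(2*Real.sin φ*Real.cos φ)/(Real.cos a^2 - Real.sin a^2)) φ := by
    have := (((Real.hasDerivAt_cos φ).pow 2).sub_const (Real.sin a^2)).div_const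
      (Real.cos a^2 - Real.sin a^2)
    refine this.congr_deriv ?_
    push_cast
    ring
  have dsq := (Real.hasDerivAt_sqrt hv0.ne').comp φ dv
  have hsv1 : Real.sqrt ((Real.cos φ^2 - Real.sin a^2)/(Real.cos a^2 - Real.sin a^2)) < 1 := by
    rw [show (1:ℝ) = Real.sqrt 1 from Real.sqrt_one.symm]
    exact Real.sqrt_lt_sqrt hv0.le hv1
  have darc := (Real.hasDerivAt_arcsin
    (by nlinarith [Real.sqrt_nonneg ((Real.cos φ^2 - Real.sin a^2)/(Real.cos a^2 - Real.sin a^2))])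
    hsv1.ne).comp φ dsq
  refine darc.congr_deriv ?_
  symm
  rw [← hAB]
  exact (aux_alg1 (Real.cos φ^2 - Real.sin a^2) (Real.cos a^2 - Real.cos φ^2)
    (Real.sin φ) (Real.cos φ) hP1 hP2).symm

lemma subf'_meas (a : ℝ) : Measurable (subf' a) := by
  unfold subf'
  exact ((Real.continuous_sin.mul Real.continuous_cos).neg).measurable.div
    (Real.continuous_sqrt.comp
      ((((Real.continuous_cos.pow 2).sub continuous_const)).mul
        (continuous_const.sub (Real.continuous_cos.pow 2)))).measurable

lemma Gf_abs_le (a θ : ℝ) : |Gf a θ| ≤ 1 := by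
  unfold Gf
  rw [abs_mul, abs_of_nonneg (Real.sqrt_nonneg _)]
  have h1 : Real.sqrt (1 - Real.sqrt (1 - Real.tan a^2)^2 * Real.sin θ ^ 2) ≤ 1 := by
    rw [Real.sqrt_le_one]
    nlinarith [sq_nonneg (Real.sqrt (1 - Real.tan a^2) * Real.sin θ)]
  nlinarith [Real.abs_cos_le_one a, abs_nonneg (Real.cos a),
    Real.sqrt_nonneg (1 - Real.sqrt (1 - Real.tan a^2)^2 * Real.sin θ ^ 2)]

lemma bound_core (a x K t : ℝ) (hK : 0 < K) (ht : 0 < t)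
    (hD2 : K * t ≤ (Real.cos x^2 - Real.sin a^2) * (Real.cos a^2 - Real.cos x^2))
    (hsx : 0 ≤ Real.sin x) (hcx : 0 ≤ Real.cos x) :
    ‖(Gf a ∘ subf a) x * subf' a x‖ ≤ (Real.sqrt K)⁻¹ * t ^ (-(1/2) : ℝ) := by
  have hKt : 0 < Real.sqrt K * Real.sqrt t := by positivity
  have hsq : Real.sqrt K * Real.sqrt t
      ≤ Real.sqrt ((Real.cos x^2 - Real.sin a^2) * (Real.cos a^2 - Real.cos x^2)) := by
    rw [← Real.sqrt_mul hK.le]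
    exact Real.sqrt_le_sqrt hD2
  have habs : |subf' a x| = (Real.sin x * Real.cos x) /
      Real.sqrt ((Real.cos x^2 - Real.sin a^2) * (Real.cos a^2 - Real.cos x^2)) := by
    unfold subf'
    rw [abs_div, abs_neg, abs_of_nonneg (mul_nonneg hsx hcx),
      abs_of_nonneg (Real.sqrt_nonneg _)]
  have hsc1 : Real.sin x * Real.cos x ≤ 1 := by
    nlinarith [Real.sin_le_one x, Real.cos_le_one x]
  have hrpow : t ^ (-(1/2) : ℝ) = (Real.sqrt t)⁻¹ := by
    rw [Real.rpow_neg ht.le, Real.sqrt_eq_rpow]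
  rw [Real.norm_eq_abs, abs_mul, hrpow]
  calc |(Gf a ∘ subf a) x| * |subf' a x|
      ≤ 1 * ((Real.sin x * Real.cos x) /
          Real.sqrt ((Real.cos x^2 - Real.sin a^2) * (Real.cos a^2 - Real.cos x^2))) := by
        rw [habs]
        exact mul_le_mul_of_nonneg_right (Gf_abs_le a _)
          (div_nonneg (mul_nonneg hsx hcx) (Real.sqrt_nonneg _))
    _ ≤ 1 / (Real.sqrt K * Real.sqrt t) := by
        rw [one_mul]
        exact div_le_div₀ (by norm_num) hsc1 hKt hsq
    _ = (Real.sqrt K)⁻¹ * (Real.sqrt t)⁻¹ := by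
        rw [one_div, mul_inv]

lemma left_quad_bound (a x : ℝ) (ha : 0 < a) (ha4 : a < Real.pi/4) (hx1 : a < x)
    (hx2 : x ≤ Real.pi/4) :
    ((1/2 - Real.sin a^2) * (Real.sin a/4)) * (x - a)
      ≤ (Real.cos x^2 - Real.sin a^2) * (Real.cos a^2 - Real.cos x^2) := by
  have hpi := Real.pi_pos
  have hpi4 := Real.pi_le_four
  have hs : 0 < Real.sin a := Real.sin_pos_of_pos_of_lt_pi ha (by linarith)
  have hsx : 0 ≤ Real.sin x := Real.sin_nonneg_of_nonneg_of_le_pi (by linarith) (by linarith)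
  have h2 : (1:ℝ) ≤ Real.sqrt 2 := by
    nlinarith [Real.sq_sqrt (show (0:ℝ) ≤ 2 by norm_num), Real.sqrt_nonneg 2]
  have hsq2 : Real.sqrt 2 ^ 2 = 2 := Real.sq_sqrt (by norm_num)
  have hsinlb : (x - a)/4 ≤ Real.sin x - Real.sin a := by
    rw [Real.sin_sub_sin]
    have t1 : (x-a)/2/2 ≤ Real.sin ((x-a)/2) := halfsin _ (by linarith) (by linarith)
    have t2 : (1:ℝ)/2 ≤ Real.cos ((x+a)/2) := by
      have h4 : Real.cos (Real.pi/4) ≤ Real.cos ((x+a)/2) :=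
        Real.cos_le_cos_of_nonneg_of_le_pi (by linarith) (by linarith) (by linarith)
      rw [Real.cos_pi_div_four] at h4
      linarith
    nlinarith [t1, t2, Real.sin_nonneg_of_nonneg_of_le_pi (show (0:ℝ) ≤ (x-a)/2 by linarith)
      (show (x-a)/2 ≤ Real.pi by linarith)]
  have hsin_mono : Real.sin a ≤ Real.sin x := by linarith
  have hcos2 : (1:ℝ)/2 ≤ Real.cos x^2 := by
    have hcx4 : Real.cos (Real.pi/4) ≤ Real.cos x :=
      Real.cos_le_cos_of_nonneg_of_le_pi (by linarith) (by linarith) hx2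
    rw [Real.cos_pi_div_four] at hcx4
    nlinarith [Real.sqrt_nonneg 2]
  have hs2 : Real.sin a^2 ≤ 1/2 := by
    have : Real.sin a ≤ Real.sin (Real.pi/4) :=
      Real.sin_le_sin_of_le_of_le_pi_div_two (by linarith) (by linarith) (by linarith)
    rw [Real.sin_pi_div_four] at this
    nlinarith [Real.sqrt_nonneg 2]
  have hpy : Real.cos a^2 - Real.cos x^2 = (Real.sin x - Real.sin a) * (Real.sin x + Real.sin a) := by
    have h1 := Real.sin_sq_add_cos_sq a
    have h2 := Real.sin_sq_add_cos_sq x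
    nlinarith [h1, h2]
  have hB : (x - a)/4 * Real.sin a ≤ (Real.sin x - Real.sin a) * (Real.sin x + Real.sin a) := by
    nlinarith [hsinlb, hs, hsx, hsin_mono]
  have e2 : (1/2 - Real.sin a^2) * ((x-a)/4*Real.sin a)
      ≤ (Real.cos x^2 - Real.sin a^2)*(Real.cos a^2 - Real.cos x^2) := by
    rw [hpy]
    apply mul_le_mul (by linarith) hB
      (mul_nonneg (by linarith) hs.le) (by linarith)
  nlinarith [e2]

set_option maxHeartbeats 1000000 in
lemma right_quad_bound (a x : ℝ) (ha : 0 < a) (ha4 : a < Real.pi/4)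
    (hx1 : Real.pi/4 ≤ x) (hx2 : x < Real.pi/2 - a) :
    ((Real.cos a^2 - 1/2) * (Real.sin a/4)) * ((Real.pi/2 - a) - x)
      ≤ (Real.cos x^2 - Real.sin a^2) * (Real.cos a^2 - Real.cos x^2) := by
  have hpi := Real.pi_pos
  have hpi4 := Real.pi_le_four
  have hs : 0 < Real.sin a := Real.sin_pos_of_pos_of_lt_pi ha (by linarith)
  have hc : 0 < Real.cos a := Real.cos_pos_of_mem_Ioo ⟨by linarith, by linarith⟩
  have hsc : Real.sin a < Real.cos a := by
    rw [← Real.sin_pi_div_two_sub]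
    exact Real.strictMonoOn_sin ⟨by linarith, by linarith⟩ ⟨by linarith, by linarith⟩ (by linarith)
  have hcx : 0 ≤ Real.cos x := by
    apply Real.cos_nonneg_of_mem_Icc
    constructor <;> [linarith; linarith]
  have h2 : (1:ℝ) ≤ Real.sqrt 2 := Real.one_le_sqrt.2 (by norm_num)
  have hsq2 : Real.sqrt 2 ^ 2 = 2 := Real.sq_sqrt (by norm_num)
  have hcb : Real.cos (Real.pi/2 - a) = Real.sin a := Real.cos_pi_div_two_sub a
  have hcoslb : ((Real.pi/2 - a) - x)/4 ≤ Real.cos x - Real.sin a := by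
    rw [← hcb]
    have hsplit : Real.cos x - Real.cos (Real.pi/2 - a)
        = 2 * Real.sin ((x+(Real.pi/2 - a))/2) * Real.sin (((Real.pi/2 - a)-x)/2) := by
      rw [Real.cos_sub_cos, show (x - (Real.pi/2 - a))/2 = -(((Real.pi/2 - a)-x)/2) by ring,
        Real.sin_neg]
      ring
    rw [hsplit]
    have t1 : ((Real.pi/2 - a)-x)/2/2 ≤ Real.sin (((Real.pi/2 - a)-x)/2) :=
      halfsin _ (by linarith) (by linarith)
    have t2 : (1:ℝ)/2 ≤ Real.sin ((x+(Real.pi/2 - a))/2) := by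
      have h4 : Real.sin (Real.pi/4) ≤ Real.sin ((x+(Real.pi/2 - a))/2) :=
        Real.sin_le_sin_of_le_of_le_pi_div_two (by linarith) (by linarith) (by linarith)
      rw [Real.sin_pi_div_four] at h4
      linarith
    nlinarith [t1, t2, Real.sin_nonneg_of_nonneg_of_le_pi
      (show (0:ℝ) ≤ ((Real.pi/2 - a)-x)/2 by linarith)
      (show ((Real.pi/2 - a)-x)/2 ≤ Real.pi by linarith)]
  have hcos_mono : Real.sin a ≤ Real.cos x := by linarith
  have hcosx2 : Real.cos x^2 ≤ 1/2 := by
    have hcx4 : Real.cos x ≤ Real.cos (Real.pi/4) :=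
      Real.cos_le_cos_of_nonneg_of_le_pi (by linarith) (by linarith) hx1
    rw [Real.cos_pi_div_four] at hcx4
    nlinarith [Real.sqrt_nonneg 2]
  have hc2 : 1/2 < Real.cos a^2 := by nlinarith [Real.sin_sq_add_cos_sq a]
  have hB : ((Real.pi/2 - a) - x)/4 * Real.sin a
      ≤ (Real.cos x - Real.sin a) * (Real.cos x + Real.sin a) := by
    nlinarith [hcoslb, hs, hcx, hcos_mono]
  have hfac : Real.cos x^2 - Real.sin a^2
      = (Real.cos x - Real.sin a) * (Real.cos x + Real.sin a) := by ring
  have e2 : (((Real.pi/2 - a) - x)/4 * Real.sin a) * (Real.cos a^2 - 1/2)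
      ≤ (Real.cos x^2 - Real.sin a^2) * (Real.cos a^2 - Real.cos x^2) := by
    rw [hfac]
    apply mul_le_mul hB (by linarith) (by linarith)
    nlinarith [hB, hs, hx2]
  nlinarith [e2]

set_option maxHeartbeats 1000000 in
lemma pointwise_id (a φ : ℝ) (ha : 0 < a) (ha4 : a < Real.pi/4)
    (hφ1 : a < φ) (hφ2 : φ < Real.pi/2 - a) :
    Gf a (subf a φ) * subf' a φ
      = -(Real.sin φ / Real.sqrt (1 - Real.sin a ^ 2 * Real.cos a ^ 2 /
          (Real.sin φ ^ 2 * Real.cos φ ^ 2))) := by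
  have hpi := Real.pi_pos
  have hs : 0 < Real.sin a := Real.sin_pos_of_pos_of_lt_pi ha (by linarith)
  have hc : 0 < Real.cos a := Real.cos_pos_of_mem_Ioo ⟨by linarith, by linarith⟩
  have hsc : Real.sin a < Real.cos a := by
    rw [← Real.sin_pi_div_two_sub]
    exact Real.strictMonoOn_sin ⟨by linarith, by linarith⟩ ⟨by linarith, by linarith⟩ (by linarith)
  have hd : 0 < Real.cos a ^2 - Real.sin a ^2 := by nlinarith
  have hsφ : 0 < Real.sin φ := Real.sin_pos_of_pos_of_lt_pi (by linarith) (by linarith)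
  have hcφ : 0 < Real.cos φ := Real.cos_pos_of_mem_Ioo ⟨by linarith, by linarith⟩
  have hc1 : Real.sin a < Real.cos φ := by
    rw [← Real.cos_pi_div_two_sub]
    exact Real.strictAntiOn_cos ⟨by linarith, by linarith⟩ ⟨by linarith, by linarith⟩ hφ2
  have hc2 : Real.cos φ < Real.cos a := by
    exact Real.strictAntiOn_cos ⟨by linarith, by linarith⟩ ⟨by linarith, by linarith⟩ hφ1
  have hP1 : 0 < Real.cos φ^2 - Real.sin a^2 := by nlinarith
  have hP2 : 0 < Real.cos a^2 - Real.cos φ^2 := by nlinarith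
  have hv0 : 0 < (Real.cos φ^2 - Real.sin a^2)/(Real.cos a^2 - Real.sin a^2) := div_pos hP1 hd
  have hv1 : (Real.cos φ^2 - Real.sin a^2)/(Real.cos a^2 - Real.sin a^2) ≤ 1 :=
    (div_le_one hd).2 (by linarith)
  have h1t : 0 ≤ 1 - Real.tan a ^ 2 := by
    rw [Real.tan_eq_sin_div_cos, div_pow]
    have : Real.sin a^2/Real.cos a^2 ≤ 1 := by
      rw [div_le_one (by positivity)]; nlinarith
    linarith
  -- sin of the substitution value
  have hsin : Real.sin (subf a φ)
      = Real.sqrt ((Real.cos φ^2 - Real.sin a^2)/(Real.cos a^2 - Real.sin a^2)) := by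
    unfold subf
    apply Real.sin_arcsin _ (Real.sqrt_le_one.2 hv1)
    have := Real.sqrt_nonneg ((Real.cos φ^2 - Real.sin a^2)/(Real.cos a^2 - Real.sin a^2))
    linarith
  have hGh : Gf a (subf a φ) = Real.sin φ := by
    unfold Gf
    rw [hsin, Real.sq_sqrt hv0.le, Real.sq_sqrt h1t]
    have hKv : 1 - (1 - Real.tan a^2) * ((Real.cos φ^2 - Real.sin a^2)/(Real.cos a^2 - Real.sin a^2))
        = Real.sin φ^2/Real.cos a^2 := by
      rw [Real.tan_eq_sin_div_cos, div_pow, Real.sin_sq φ, Real.sin_sq a]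
      have hne : (0:ℝ) < Real.cos a^2 - (1 - Real.cos a^2) := by nlinarith [Real.sin_sq_add_cos_sq a]
      field_simp
      ring
    rw [hKv, show Real.sin φ^2/Real.cos a^2 = (Real.sin φ/Real.cos a)^2 by ring,
      Real.sqrt_sq (by positivity)]
    field_simp
  have hid : Real.sin φ^2 * Real.cos φ^2 - Real.sin a^2*Real.cos a^2
      = (Real.cos φ^2 - Real.sin a^2) * (Real.cos a^2 - Real.cos φ^2) := by
    rw [Real.sin_sq φ, Real.sin_sq a]
    ring
  have halg := aux_alg2 (Real.cos φ^2 - Real.sin a^2) (Real.cos a^2 - Real.cos φ^2)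
    (Real.sin φ) (Real.cos φ) (Real.sin a) (Real.cos a) hP1 hP2 hsφ hcφ hid
  rw [hGh, halg]
  unfold subf'
  ring

set_option maxHeartbeats 1000000 in
lemma f2_integrable (a : ℝ) (ha : 0 < a) (ha4 : a < Real.pi/4) :
    IntervalIntegrable (fun x => (Gf a ∘ subf a) x * subf' a x)
      MeasureTheory.volume a (Real.pi/2 - a) := by
  have hpi := Real.pi_pos
  have hs : 0 < Real.sin a := Real.sin_pos_of_pos_of_lt_pi ha (by linarith)
  have hc : 0 < Real.cos a := Real.cos_pos_of_mem_Ioo ⟨by linarith, by linarith⟩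
  have hsc : Real.sin a < Real.cos a := by
    rw [← Real.sin_pi_div_two_sub]
    exact Real.strictMonoOn_sin ⟨by linarith, by linarith⟩ ⟨by linarith, by linarith⟩ (by linarith)
  have hmeas : Measurable (fun x => (Gf a ∘ subf a) x * subf' a x) :=
    (((Gf_cont a).comp (subf_cont a)).measurable).mul (subf'_meas a)
  have hK1 : 0 < (1/2 - Real.sin a^2) * (Real.sin a/4) := by
    have h12 : Real.sin a^2 < 1/2 := by nlinarith [Real.sin_sq_add_cos_sq a]
    have : 0 < Real.sin a/4 := by linarith
    exact mul_pos (by linarith) this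
  have hK2 : 0 < (Real.cos a^2 - 1/2) * (Real.sin a/4) := by
    have h12 : 1/2 < Real.cos a^2 := by nlinarith [Real.sin_sq_add_cos_sq a]
    exact mul_pos (by linarith) (by linarith)
  have hleft : IntervalIntegrable (fun x => (Gf a ∘ subf a) x * subf' a x)
      MeasureTheory.volume a (Real.pi/4) := by
    have h0 : IntervalIntegrable (fun y : ℝ => y ^ (-(1/2):ℝ)) MeasureTheory.volume
        0 (Real.pi/4 - a) := intervalIntegral.intervalIntegrable_rpow' (by norm_num)
    have h1 := (h0.comp_sub_right a).const_mul
      ((Real.sqrt ((1/2 - Real.sin a^2) * (Real.sin a/4)))⁻¹)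
    rw [zero_add, sub_add_cancel] at h1
    apply h1.mono_fun' hmeas.aestronglyMeasurable.restrict
    filter_upwards [MeasureTheory.ae_restrict_mem measurableSet_uIoc] with x hx
    rw [Set.uIoc_of_le (show a ≤ Real.pi/4 by linarith)] at hx
    have hsx : 0 ≤ Real.sin x := Real.sin_nonneg_of_nonneg_of_le_pi (by linarith [hx.1])
      (by linarith [hx.2])
    have hcx : 0 ≤ Real.cos x := Real.cos_nonneg_of_mem_Icc
      ⟨by linarith [hx.1], by linarith [hx.2]⟩
    exact bound_core a x _ _ hK1 (by linarith [hx.1])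
      (left_quad_bound a x ha ha4 hx.1 hx.2) hsx hcx
  have hright : IntervalIntegrable (fun x => (Gf a ∘ subf a) x * subf' a x)
      MeasureTheory.volume (Real.pi/4) (Real.pi/2 - a) := by
    have h0 : IntervalIntegrable (fun y : ℝ => y ^ (-(1/2):ℝ)) MeasureTheory.volume
        0 ((Real.pi/2 - a) - Real.pi/4) := intervalIntegral.intervalIntegrable_rpow' (by norm_num)
    have h1 := (h0.comp_sub_left (Real.pi/2 - a)).const_mul
      ((Real.sqrt ((Real.cos a^2 - 1/2) * (Real.sin a/4)))⁻¹)
    rw [sub_zero, show (Real.pi/2 - a) - ((Real.pi/2 - a) - Real.pi/4) = Real.pi/4 by ring] at h1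
    apply h1.symm.mono_fun' hmeas.aestronglyMeasurable.restrict
    filter_upwards [MeasureTheory.ae_restrict_mem measurableSet_uIoc] with x hx
    rw [Set.uIoc_of_le (show Real.pi/4 ≤ Real.pi/2 - a by linarith)] at hx
    rcases eq_or_lt_of_le hx.2 with hxb|hxb
    · rw [hxb]
      simp [Function.comp, subf', Real.cos_pi_div_two_sub,
        Real.zero_rpow (show (-(1/2):ℝ) ≠ 0 by norm_num)]
    · have hsx : 0 ≤ Real.sin x := Real.sin_nonneg_of_nonneg_of_le_pi (by linarith [hx.1])
        (by linarith [hx.2])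
      have hcx : 0 ≤ Real.cos x := Real.cos_nonneg_of_mem_Icc
        ⟨by linarith [hx.1], by linarith [hx.2]⟩
      exact bound_core a x _ _ hK2 (by linarith)
        (right_quad_bound a x ha ha4 hx.1.le hxb) hsx hcx
  exact hleft.trans hright

set_option maxHeartbeats 1000000 in
theorem stmt12 : ∀ a : ℝ, 0 < a → a < Real.pi/4 →
    (∫ φ in a..(Real.pi/2 - a),
        Real.sin φ / Real.sqrt (1 - Real.sin a ^ 2 * Real.cos a ^ 2 /
          (Real.sin φ ^ 2 * Real.cos φ ^ 2))) =
      Real.cos a * ellE (Real.sqrt (1 - Real.tan a ^ 2)) := by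
  intro a ha ha'
  have hpi := Real.pi_pos
  have hab : a < Real.pi/2 - a := by linarith
  have hs : 0 < Real.sin a := Real.sin_pos_of_pos_of_lt_pi ha (by linarith)
  have hc : 0 < Real.cos a := Real.cos_pos_of_mem_Ioo ⟨by linarith, by linarith⟩
  have hsc : Real.sin a < Real.cos a := by
    rw [← Real.sin_pi_div_two_sub]
    exact Real.strictMonoOn_sin ⟨by linarith, by linarith⟩ ⟨by linarith, by linarith⟩ hab
  have hd : 0 < Real.cos a ^2 - Real.sin a ^2 := by nlinarith
  have hmin : min a (Real.pi/2 - a) = a := min_eq_left hab.le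
  have hmax : max a (Real.pi/2 - a) = Real.pi/2 - a := max_eq_right hab.le
  have hderiv : ∀ x ∈ Set.Ioo (min a (Real.pi/2 - a)) (max a (Real.pi/2 - a)),
      HasDerivWithinAt (subf a) (subf' a x) (Set.Ioi x) x := by
    rw [hmin, hmax]
    intro x hx
    have hc1 : Real.sin a < Real.cos x := by
      rw [← Real.cos_pi_div_two_sub]
      exact Real.strictAntiOn_cos ⟨by linarith [hx.1], by linarith [hx.2]⟩
        ⟨by linarith, by linarith⟩ hx.2
    have hc2 : Real.cos x < Real.cos a := by
      exact Real.strictAntiOn_cos ⟨by linarith, by linarith⟩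
        ⟨by linarith [hx.1], by linarith [hx.2]⟩ hx.1
    exact (subf_deriv a x hd (by nlinarith) (by nlinarith)).hasDerivWithinAt
  have hG1 : MeasureTheory.IntegrableOn (Gf a) (subf a '' (Set.uIcc a (Real.pi/2 - a))) := by
    refine MeasureTheory.IntegrableOn.mono_set
      ((Gf_cont a).integrableOn_Icc (a := 0) (b := Real.pi/2)) ?_
    rintro y ⟨x, -, rfl⟩
    exact ⟨Real.arcsin_nonneg.2 (Real.sqrt_nonneg _), Real.arcsin_le_pi_div_two _⟩
  have hsub := intervalIntegral.integral_comp_mul_deriv'''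
    (f := subf a) (f' := subf' a) (g := Gf a)
    ((subf_cont a).continuousOn) hderiv ((Gf_cont a).continuousOn) hG1
    ((intervalIntegrable_iff' (h := enorm_ne_top)).mp (f2_integrable a ha ha'))
  have hha : subf a a = Real.pi/2 := by
    unfold subf
    rw [div_self hd.ne', Real.sqrt_one, Real.arcsin_one]
  have hhb : subf a (Real.pi/2 - a) = 0 := by
    unfold subf
    rw [Real.cos_pi_div_two_sub, sub_self, zero_div, Real.sqrt_zero, Real.arcsin_zero]
  rw [hha, hhb] at hsub
  have heq : Set.EqOn (fun x => (Gf a ∘ subf a) x * subf' a x)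
      (fun φ => -(Real.sin φ / Real.sqrt (1 - Real.sin a ^ 2 * Real.cos a ^ 2 /
        (Real.sin φ ^ 2 * Real.cos φ ^ 2)))) (Set.uIcc a (Real.pi/2 - a)) := by
    rw [Set.uIcc_of_le hab.le]
    intro x hx
    rcases eq_or_lt_of_le hx.1 with h1|h1
    · have e1 : Real.sin a ^2 * Real.cos a^2 / (Real.sin a^2 * Real.cos a^2) = 1 :=
        div_self (by positivity)
      simp only [← h1, Function.comp_apply]
      simp [subf', e1]
    · rcases eq_or_lt_of_le hx.2 with h2|h2
      · have e1 : Real.sin a ^2 * Real.cos a^2 / (Real.cos a^2 * Real.sin a^2) = 1 := by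
          rw [show Real.cos a^2 * Real.sin a^2 = Real.sin a^2 * Real.cos a^2 from mul_comm _ _]
          exact div_self (by positivity)
        simp only [h2, Function.comp_apply]
        simp [subf', Real.cos_pi_div_two_sub, Real.sin_pi_div_two_sub, e1]
      · exact pointwise_id a x ha ha' h1 h2
  have hL : (∫ φ in a..(Real.pi/2 - a),
        Real.sin φ / Real.sqrt (1 - Real.sin a ^ 2 * Real.cos a ^ 2 /
          (Real.sin φ ^ 2 * Real.cos φ ^ 2)))
      = - ∫ x in a..(Real.pi/2 - a), (Gf a ∘ subf a) x * subf' a x := by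
    rw [intervalIntegral.integral_congr heq, intervalIntegral.integral_neg, neg_neg]
  rw [hL, hsub, intervalIntegral.integral_symm 0 (Real.pi/2), neg_neg]
  simp only [Gf]
  rw [intervalIntegral.integral_const_mul]
  simp only [ellE]
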